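/- With A(T) := E[max(X_T, T - X_T)] - T/2 for X_T ~ Binomial(T, 1/2), the sequence A satisfies the recurrence A(T) = A(T-1)/(T-1) + A(T-2) for all T ≥ 3, with A(1) = 1/2 and A(2) = 1/2. -/

import Mathlib

open Finset

/-- Sum of `C(T,k) * max(k, T-k)` over `k`, i.e. `2^T * E[max(X_T, T - X_T)]`. -/
noncomputable def Mfun (T : ℕ) : ℕ := ∑ k ∈ range (T+1), T.choose k * max k (T - k)

theorem pascal_sum (T : ℕ) (f : ℕ → ℕ) :
    ∑ k ∈ range (T+2), (T+1).choose k * f k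
      = ∑ k ∈ range (T+1), T.choose k * f k + ∑ k ∈ range (T+1), T.choose k * f (k+1) := by
  rw [Finset.sum_range_succ' (fun k => (T+1).choose k * f k) (T+1)]
  simp only [Nat.choose_succ_succ, add_mul, Finset.sum_add_distrib]
  rw [Finset.sum_range_succ (fun k => T.choose (k+1) * f (k+1)) T]
  have h1 : ∑ k ∈ range T, T.choose (k+1) * f (k+1)
      = ∑ k ∈ range (T+1), T.choose k * f k - T.choose 0 * f 0 := by
    rw [Finset.sum_range_succ' (fun k => T.choose k * f k) T]
    omega
  rw [h1]
  have h2 : T.choose (T+1) = 0 := Nat.choose_succ_self T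
  have h3 : f 0 ≤ ∑ k ∈ range (T+1), T.choose k * f k := by
    simpa using Finset.single_le_sum (f := fun k => T.choose k * f k)
      (fun i _ => Nat.zero_le _) (by simp : (0:ℕ) ∈ range (T+1))
  simp [h2]
  omega

theorem Mrec (T : ℕ) :
    Mfun (T+1) = 2 * Mfun T + 2^T + (if T % 2 = 0 then T.choose (T/2) else 0) := by
  have key : ∀ k, k ≤ T → max k (T+1-k) + max (k+1) (T-k)
      = 2 * max k (T-k) + 1 + (if 2*k = T then 1 else 0) := by
    intro k hk; split_ifs with h <;> omega
  calc Mfun (T+1) = ∑ k ∈ range (T+1), T.choose k * max k (T+1-k)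
        + ∑ k ∈ range (T+1), T.choose k * max (k+1) (T+1-(k+1)) := by
        rw [Mfun, pascal_sum T (fun k => max k (T+1-k))]
    _ = ∑ k ∈ range (T+1), T.choose k * (max k (T+1-k) + max (k+1) (T-k)) := by
        simp [mul_add, Finset.sum_add_distrib]
    _ = ∑ k ∈ range (T+1), T.choose k * (2 * max k (T-k) + 1 + (if 2*k = T then 1 else 0)) := by
        apply Finset.sum_congr rfl
        intro k hk
        rw [key k (by simp at hk; omega)]
    _ = 2 * Mfun T + 2^T + (if T % 2 = 0 then T.choose (T/2) else 0) := by
        simp only [mul_add, Finset.sum_add_distrib, mul_one, mul_ite, mul_zero]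
        rw [Nat.sum_range_choose]
        have h1 : ∑ k ∈ range (T+1), T.choose k * (2 * max k (T-k)) = 2 * Mfun T := by
          rw [Mfun, Finset.mul_sum]; apply Finset.sum_congr rfl; intros; ring
        rw [h1]
        congr 1
        by_cases hpar : T % 2 = 0
        · rw [if_pos hpar]
          rw [Finset.sum_eq_single (T/2)]
          · rw [if_pos (by omega)]
          · intro k hk hne; rw [if_neg (by omega)]
          · intro h; exact absurd (by simp; omega : T/2 ∈ range (T+1)) h
        · rw [if_neg hpar, Finset.sum_eq_zero]
          intro k hk
          rw [if_neg (by omega)]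

theorem succ_mul' (s : ℕ) : (s+1) * (2*s+1).choose (s+1) = (2*s+1) * (2*s).choose s := by
  have h := Nat.add_one_mul_choose_eq (2*s) s
  ring_nf at h ⊢
  omega

theorem central_double (s : ℕ) : (2*s+2).choose (s+1) = 2 * (2*s+1).choose (s+1) := by
  have h := Nat.choose_symm (by omega : s+1 ≤ 2*s+1)
  rw [show (2*s+1) - (s+1) = s by omega] at h
  rw [Nat.choose_succ_succ, h]; ring

theorem central_succ (s : ℕ) :
    (s+2) * (2*s+4).choose (s+2) = 2*(2*s+3) * (2*s+2).choose (s+1) := by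
  have h := Nat.succ_mul_centralBinom_succ (s+1)
  simp [Nat.centralBinom, show 2*(s+1+1) = 2*s+4 by ring, show 2*(s+1) = 2*s+2 by ring] at h
  ring_nf at h ⊢
  omega

theorem key_odd (s : ℕ) :
    (s+2) * (2*s+3).choose (s+2) = (2*s+3) * (2 * (2*s+1).choose (s+1)) := by
  have h := succ_mul' (s+1)
  have h2 := central_double s
  ring_nf at h h2 ⊢
  rw [h2] at h
  linarith

theorem key_even2 (s : ℕ) :
    (s+2) * (2*s+3).choose (s+2) = (2*s+3) * (2*s+2).choose (s+1) := by
  rw [central_double]; exact key_odd s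

theorem Mclosed (T : ℕ) : 2 * Mfun T = T * 2^T + 2 * ((T+1)/2) * T.choose ((T+1)/2) := by
  induction T with
  | zero => simp [Mfun]
  | succ T ih =>
    rw [Mrec, Nat.mul_add, Nat.mul_add, ih]
    rcases Nat.even_or_odd T with ⟨s, hs⟩ | ⟨s, hs⟩
    · subst hs
      rw [if_pos (by omega)]
      rw [show (s+s)/2 = s by omega, show (s+s+1)/2 = s by omega,
          show (s+s+1+1)/2 = s+1 by omega]
      have h := succ_mul' s
      rw [show 2*s = s+s by ring] at h
      ring_nf
      ring_nf at h
      nlinarith [h, pow_pos (by norm_num : 0 < 2) (s+s)]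
    · subst hs
      rw [if_neg (by omega)]
      rw [show (2*s+1+1)/2 = s+1 by omega, show (2*s+1+1+1)/2 = s+1 by omega]
      have h := central_double s
      ring_nf
      ring_nf at h
      nlinarith [h]

/-- `A T` is the expected value of `max(X_T, T - X_T)` minus `T/2`, where
`X_T ~ Binomial(T, 1/2)`. -/
noncomputable def A (T : ℕ) : ℝ :=
  (∑ k ∈ Finset.range (T + 1), (T.choose k : ℝ) / 2 ^ T * max (k : ℝ) ((T : ℝ) - k))
    - (T : ℝ) / 2

theorem A_eq (T : ℕ) : A T = (((T+1)/2 : ℕ) : ℝ) * (T.choose ((T+1)/2) : ℝ) / 2^T := by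
  have hsum : ∑ k ∈ Finset.range (T + 1), (T.choose k : ℝ) / 2 ^ T * max (k : ℝ) ((T : ℝ) - k)
      = (Mfun T : ℝ) / 2^T := by
    rw [Mfun, Nat.cast_sum, Finset.sum_div]
    apply Finset.sum_congr rfl
    intro k hk
    simp only [Finset.mem_range] at hk
    have hk' : k ≤ T := by omega
    rw [Nat.cast_mul, Nat.cast_max, Nat.cast_sub hk']
    ring
  have hM := Mclosed T
  have hMr : (2 * Mfun T : ℝ) = T * 2^T + 2 * ((T+1)/2 : ℕ) * T.choose ((T+1)/2) := by
    exact_mod_cast congrArg (Nat.cast : ℕ → ℝ) hM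
  rw [A, hsum]
  have h2 : (2:ℝ)^T ≠ 0 := by positivity
  field_simp
  push_cast at hMr ⊢
  linear_combination hMr

theorem rec_odd (s : ℕ) : A (2*s+3) = A (2*s+2) / ((2*s+3 : ℕ) - 1 : ℝ) + A (2*s+1) := by
  rw [A_eq, A_eq, A_eq]
  rw [show (2*s+3+1)/2 = s+2 by omega, show (2*s+2+1)/2 = s+1 by omega,
      show (2*s+1+1)/2 = s+1 by omega]
  have keyR : ((s:ℝ)+2) * ((2*s+3).choose (s+2):ℝ)
      = (2*(s:ℝ)+3)*(2*((2*s+1).choose (s+1):ℝ)) := by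
    exact_mod_cast key_odd s
  have h2R : ((2*s+2).choose (s+1):ℝ) = 2*((2*s+1).choose (s+1):ℝ) := by
    exact_mod_cast central_double s
  push_cast
  rw [h2R, keyR]
  have hne : (2*(s:ℝ)+3) - 1 ≠ 0 := by
    have : (0:ℝ) ≤ s := Nat.cast_nonneg s; intro h; linarith
  have hp : (2:ℝ)^(2*s+1) ≠ 0 := by positivity
  set c := ((2*s+1).choose (s+1):ℝ)
  rw [pow_add, pow_add, pow_add]
  field_simp
  ring

theorem rec_even (s : ℕ) : A (2*s+4) = A (2*s+3) / ((2*s+4 : ℕ) - 1 : ℝ) + A (2*s+2) := by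
  rw [A_eq, A_eq, A_eq]
  rw [show (2*s+4+1)/2 = s+2 by omega, show (2*s+3+1)/2 = s+2 by omega,
      show (2*s+2+1)/2 = s+1 by omega]
  have k1 : ((s:ℝ)+2) * ((2*s+4).choose (s+2):ℝ)
      = 2*(2*(s:ℝ)+3)*((2*s+2).choose (s+1):ℝ) := by
    exact_mod_cast central_succ s
  have k2 : ((s:ℝ)+2) * ((2*s+3).choose (s+2):ℝ)
      = (2*(s:ℝ)+3)*((2*s+2).choose (s+1):ℝ) := by
    exact_mod_cast key_even2 s
  push_cast
  rw [k1, k2]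
  have hne : (2*(s:ℝ)+4) - 1 ≠ 0 := by
    have : (0:ℝ) ≤ s := Nat.cast_nonneg s; intro h; linarith
  have hp : (2:ℝ)^(2*s+2) ≠ 0 := by positivity
  set d := ((2*s+2).choose (s+1):ℝ)
  rw [pow_add, pow_add, pow_add]
  field_simp
  ring

theorem stmt_1 :
    (∀ T : ℕ, 3 ≤ T → A T = A (T - 1) / ((T : ℝ) - 1) + A (T - 2)) ∧
      A 1 = 1 / 2 ∧ A 2 = 1 / 2 := by
  refine ⟨?_, ?_, ?_⟩
  · intro T hT
    rcases Nat.even_or_odd T with ⟨s, hs⟩ | ⟨s, hs⟩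
    · obtain ⟨u, rfl⟩ : ∃ u, T = 2*u+4 := ⟨(T-4)/2, by omega⟩
      rw [show 2*u+4-1 = 2*u+3 by omega, show 2*u+4-2 = 2*u+2 by omega]
      exact rec_even u
    · obtain ⟨u, rfl⟩ : ∃ u, T = 2*u+3 := ⟨(T-3)/2, by omega⟩
      rw [show 2*u+3-1 = 2*u+2 by omega, show 2*u+3-2 = 2*u+1 by omega]
      exact rec_odd u
  · rw [A_eq]; norm_num
  · rw [A_eq]; norm_num
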